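/- On a probability space, let f : ℝ^d → ℝ be twice continuously differentiable with ∇²f(w) ⪯ L·I for all w (0 < L < ∞) and bounded below by f_min. Let (w_k), (g_k) be ℝ^d-valued random sequences and (H̃_k) random symmetric matrices with μ̃·I ⪯ H̃_k ⪯ L̃·I almost surely (0 < μ̃, L ≤ L̃ < ∞), satisfying w_{k+1} = w_k − α H̃_k⁻¹ g_k with 0 < α ≤ μ̃/L and w₀ deterministic, and suppose each g_k satisfies the stochastic norm condition E[ ‖g_k − ∇f(w_k)‖²_{H̃_k⁻¹} | w_k, H̃_k ] ≤ θ̃_g² ‖∇f(w_k)‖²_{H̃_k⁻¹} + ι_k with θ̃_g ∈ [0,1) and ∑_{k=0}^∞ ι_k = ι̃ < ∞. Then for every positive integer T: min_{0 ≤ k ≤ T−1} E[‖∇f(w_k)‖²] ≤ (L̃/((1 − θ̃_g²) T)) · ( 2(f(w₀) − f_min)/α + ι̃ ). Moreover, ∑_{k=0}^∞ ‖∇f(w_k)‖² < ∞ almost surely, and consequently ‖∇f(w_k)‖² → 0 almost surely. -/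

import Mathlib

open Finset Matrix MeasureTheory Filter
open scoped RealInnerProductSpace

noncomputable section

abbrev Vec (d : ℕ) := EuclideanSpace ℝ (Fin d)

/-- The continuous linear operator on Euclidean space associated with a matrix. -/
noncomputable def toOp {d : ℕ} (A : Matrix (Fin d) (Fin d) ℝ) : Vec d →L[ℝ] Vec d :=
  LinearMap.toContinuousLinearMap (Matrix.toEuclideanLin A)

lemma toOp_apply {d : ℕ} (A : Matrix (Fin d) (Fin d) ℝ) (v : Vec d) :
    toOp A v = Matrix.toEuclideanLin A v := rfl

lemma toOp_mul_apply {d : ℕ} (A B : Matrix (Fin d) (Fin d) ℝ) (v : Vec d) :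
    toOp A (toOp B v) = toOp (A * B) v := by
  simp [toOp_apply, Matrix.toEuclideanLin_apply, Matrix.mulVec_mulVec]

lemma toOp_one {d : ℕ} (v : Vec d) : toOp (1 : Matrix (Fin d) (Fin d) ℝ) v = v := by
  simp [toOp_apply, Matrix.toEuclideanLin_apply]

lemma opFacts {d : ℕ} {A : Matrix (Fin d) (Fin d) ℝ} {μt Lt : ℝ} (hμ : 0 < μt) (hLt : 0 < Lt)
    (hsym : A.IsSymm)
    (hlb : ∀ v : Vec d, μt * ‖v‖ ^ 2 ≤ ⟪toOp A v, v⟫)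
    (hub : ∀ v : Vec d, ⟪toOp A v, v⟫ ≤ Lt * ‖v‖ ^ 2) :
    (∀ u v : Vec d, ⟪toOp A⁻¹ u, v⟫ = ⟪u, toOp A⁻¹ v⟫) ∧
    (∀ v : Vec d, ‖toOp A⁻¹ v‖ ^ 2 ≤ (1 / μt) * ⟪toOp A⁻¹ v, v⟫) ∧
    (∀ v : Vec d, (1 / Lt) * ‖v‖ ^ 2 ≤ ⟪toOp A⁻¹ v, v⟫) ∧
    (∀ v : Vec d, ⟪toOp A⁻¹ v, v⟫ ≤ (1 / μt) * ‖v‖ ^ 2) := by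
  -- symmetry of toOp A
  have hherm : A.IsHermitian := by
    rwa [Matrix.IsHermitian, Matrix.conjTranspose_eq_transpose_of_trivial]
  have hTsym : ∀ u v : Vec d, ⟪toOp A u, v⟫ = ⟪u, toOp A v⟫ := by
    have := Matrix.isHermitian_iff_isSymmetric.mp hherm
    intro u v; exact this u v
  -- invertibility
  have hinj : Function.Injective (toOp A) := by
    intro u v huv
    have h := hlb (u - v)
    rw [map_sub, huv, sub_self] at h
    simp only [inner_zero_left] at h
    have : ‖u - v‖ ^ 2 ≤ 0 := by nlinarith
    have : u - v = 0 := by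
      have := pow_eq_zero_iff (n := 2) (by norm_num) |>.mp (le_antisymm this (by positivity))
      exact norm_eq_zero.mp this
    exact sub_eq_zero.mp this
  have hmvinj : Function.Injective (A.mulVec) := by
    intro u v huv
    have h2 : toOp A ((WithLp.equiv 2 (Fin d → ℝ)).symm u) = toOp A ((WithLp.equiv 2 (Fin d → ℝ)).symm v) := by
      simp [toOp_apply, Matrix.toEuclideanLin_apply, huv]
    have := hinj h2
    simpa using congrArg (WithLp.equiv 2 (Fin d → ℝ)) this
  have hunit : IsUnit A := Matrix.mulVec_injective_iff_isUnit.mp hmvinj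
  have hdet : IsUnit A.det := (Matrix.isUnit_iff_isUnit_det A).mp hunit
  have hinv1 : ∀ v : Vec d, toOp A (toOp A⁻¹ v) = v := by
    intro v; rw [toOp_mul_apply, Matrix.mul_nonsing_inv A hdet, toOp_one]
  have hinv2 : ∀ v : Vec d, toOp A⁻¹ (toOp A v) = v := by
    intro v; rw [toOp_mul_apply, Matrix.nonsing_inv_mul A hdet, toOp_one]
  -- symmetry of inverse
  have hsyminv : (A⁻¹).IsSymm := by
    rw [Matrix.IsSymm, Matrix.transpose_nonsing_inv, hsym]
  have hherm' : (A⁻¹).IsHermitian := by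
    rwa [Matrix.IsHermitian, Matrix.conjTranspose_eq_transpose_of_trivial]
  have hSsym : ∀ u v : Vec d, ⟪toOp A⁻¹ u, v⟫ = ⟪u, toOp A⁻¹ v⟫ :=
    fun u v => Matrix.isHermitian_iff_isSymmetric.mp hherm' u v
  -- generalized Cauchy-Schwarz for T := toOp A
  have hTpos : ∀ v : Vec d, 0 ≤ ⟪toOp A v, v⟫ := fun v => le_trans (by positivity) (hlb v)
  have hCS : ∀ a b : Vec d, ⟪toOp A a, b⟫ ^ 2 ≤ ⟪toOp A a, a⟫ * ⟪toOp A b, b⟫ := by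
    intro a b
    have key : ∀ t : ℝ, 0 ≤ ⟪toOp A b, b⟫ * (t * t) + (2 * ⟪toOp A a, b⟫) * t + ⟪toOp A a, a⟫ := by
      intro t
      have h0 := hTpos (a + t • b)
      have hexp : ⟪toOp A (a + t • b), a + t • b⟫
          = ⟪toOp A b, b⟫ * (t * t) + (2 * ⟪toOp A a, b⟫) * t + ⟪toOp A a, a⟫ := by
        have hba : ⟪toOp A b, a⟫ = ⟪toOp A a, b⟫ := by
          rw [hTsym b a, real_inner_comm]
        rw [map_add, (toOp A).map_smul]
        simp only [inner_add_left, inner_add_right,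
          real_inner_smul_left, real_inner_smul_right, hba]
        ring
      linarith [hexp ▸ h0]
    have := discrim_le_zero key
    rw [discrim] at this
    nlinarith
  refine ⟨hSsym, ?_, ?_, ?_⟩
  · intro v
    set e := toOp A⁻¹ v with he
    have hTe : toOp A e = v := hinv1 v
    have h1 : ⟪e, v⟫ = ⟪toOp A e, e⟫ := by rw [hTe, real_inner_comm]
    have h2 := hlb e
    rw [← h1] at h2
    rw [div_mul_eq_mul_div, le_div_iff₀ hμ]
    nlinarith
  · intro v
    set e := toOp A⁻¹ v with he
    have hTe : toOp A e = v := hinv1 v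
    have hve : ⟪v, e⟫ = ⟪toOp A e, e⟫ := by rw [hTe]
    have hpos : (0:ℝ) ≤ ⟪v, e⟫ := hve ▸ hTpos e
    have hcs := hCS e (toOp A e)
    have hub' := hub (toOp A e)
    rw [hTe] at hcs hub'
    have hvv : ⟪v, v⟫ = ‖v‖ ^ 2 := real_inner_self_eq_norm_sq v
    have hTvpos := hTpos v
    have key : ‖v‖ ^ 2 * ‖v‖ ^ 2 ≤ ⟪v, e⟫ * (Lt * ‖v‖ ^ 2) := by nlinarith
    have hcomm : (⟪e, v⟫:ℝ) = ⟪v, e⟫ := real_inner_comm _ _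
    rw [div_mul_eq_mul_div, div_le_iff₀ hLt, hcomm]
    rcases eq_or_ne (‖v‖ ^ 2) 0 with h0 | h0
    · rw [h0]; nlinarith
    · have hv2 : 0 < ‖v‖ ^ 2 := lt_of_le_of_ne (by positivity) (Ne.symm h0)
      nlinarith
  · intro v
    set e := toOp A⁻¹ v with he
    have hTe : toOp A e = v := hinv1 v
    have hve : ⟪v, e⟫ = ⟪toOp A e, e⟫ := by rw [hTe]
    have h2 : μt * ‖e‖ ^ 2 ≤ ⟪v, e⟫ := hve ▸ hlb e
    have hcs2 : ⟪v, e⟫ ≤ ‖v‖ * ‖e‖ := real_inner_le_norm v e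
    have hcomm : (⟪e, v⟫:ℝ) = ⟪v, e⟫ := real_inner_comm _ _
    rw [hcomm, div_mul_eq_mul_div, le_div_iff₀ hμ]
    nlinarith [norm_nonneg v, norm_nonneg e, sq_nonneg (‖v‖ - μt * ‖e‖)]

lemma descent {d : ℕ} {L : ℝ} (f : Vec d → ℝ) (gradf : Vec d → Vec d)
    (Hf : Vec d → (Vec d →L[ℝ] Vec d))
    (hgrad : ∀ x, HasGradientAt f (gradf x) x)
    (hHf : ∀ x, HasFDerivAt gradf (Hf x) x)
    (hHub : ∀ x (v : Vec d), ⟪Hf x v, v⟫ ≤ L * ‖v‖ ^ 2)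
    (x y : Vec d) :
    f y ≤ f x + ⟪gradf x, y - x⟫ + L / 2 * ‖y - x‖ ^ 2 := by
  set v := y - x with hv
  -- the line map
  have hline : ∀ t : ℝ, HasDerivAt (fun t : ℝ => x + t • v) v t := by
    intro t
    simpa using ((hasDerivAt_id t).smul_const v).const_add x
  set ψ : ℝ → ℝ := fun t => ⟪gradf (x + t • v), v⟫ with hψdef
  have hφ : ∀ t : ℝ, HasDerivAt (fun t : ℝ => f (x + t • v)) (ψ t) t := by
    intro t
    have hf' := hasGradientAt_iff_hasFDerivAt.mp (hgrad (x + t • v))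
    have := hf'.comp_hasDerivAt t (hline t)
    simpa [hψdef, InnerProductSpace.toDual_apply_apply, Function.comp_def] using this
  have hψ : ∀ t : ℝ, HasDerivAt ψ ⟪Hf (x + t • v) v, v⟫ t := by
    intro t
    have hg := (hHf (x + t • v)).comp_hasDerivAt t (hline t)
    have := (HasDerivAt.inner ℝ hg (hasDerivAt_const t v))
    simpa using this
  -- ψ t - ψ 0 ≤ L ‖v‖² t  for t ≥ 0
  have hρ : ∀ t : ℝ, 0 ≤ t → ψ t - ψ 0 ≤ L * ‖v‖ ^ 2 * t := by
    intro t ht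
    set ρ : ℝ → ℝ := fun s => L * ‖v‖ ^ 2 * s - ψ s with hρdef
    have hρ' : ∀ s : ℝ, HasDerivAt ρ (L * ‖v‖ ^ 2 - ⟪Hf (x + s • v) v, v⟫) s := by
      intro s
      simpa [Pi.sub_def] using ((hasDerivAt_id s).const_mul (L * ‖v‖ ^ 2)).sub (hψ s)
    have hmono : Monotone ρ := by
      apply monotone_of_deriv_nonneg
      · exact fun s => (hρ' s).differentiableAt
      · intro s
        rw [(hρ' s).deriv]
        have := hHub (x + s • v) v
        linarith
    have := hmono ht
    simp only [hρdef] at this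
    simp only [mul_zero, zero_sub] at this
    linarith
  -- χ monotone on Ici 0
  set χ : ℝ → ℝ := fun t => f x + ψ 0 * t + L * ‖v‖ ^ 2 * t ^ 2 / 2 - f (x + t • v) with hχdef
  have hχ' : ∀ t : ℝ, HasDerivAt χ (ψ 0 + L * ‖v‖ ^ 2 * t - ψ t) t := by
    intro t
    have h1 : HasDerivAt (fun t : ℝ => f x + ψ 0 * t + L * ‖v‖ ^ 2 * t ^ 2 / 2)
        (ψ 0 + L * ‖v‖ ^ 2 * t) t := by
      have ha : HasDerivAt (fun t : ℝ => ψ 0 * t) (ψ 0) t := by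
        simpa using (hasDerivAt_id t).const_mul (ψ 0)
      have hb : HasDerivAt (fun t : ℝ => L * ‖v‖ ^ 2 * t ^ 2 / 2) (L * ‖v‖ ^ 2 * t) t := by
        have := ((hasDerivAt_pow 2 t).const_mul (L * ‖v‖ ^ 2)).div_const 2
        refine this.congr_deriv ?_
        push_cast; ring
      simpa [Pi.add_def] using (ha.const_add (f x)).add hb
    exact h1.sub (hφ t)
  have hmono : MonotoneOn χ (Set.Ici (0 : ℝ)) := by
    apply monotoneOn_of_deriv_nonneg (convex_Ici 0)
    · exact (fun t _ => ((hχ' t).differentiableAt).continuousAt.continuousWithinAt)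
    · exact fun t _ => ((hχ' t).differentiableAt).differentiableWithinAt
    · intro t ht
      rw [interior_Ici] at ht
      rw [(hχ' t).deriv]
      have := hρ t (le_of_lt ht)
      linarith
  have h01 := hmono (Set.self_mem_Ici) (Set.mem_Ici.mpr zero_le_one) zero_le_one
  simp only [hχdef] at h01
  simp only [mul_zero, zero_smul, add_zero, mul_one, one_pow, one_smul, zero_pow, mul_zero] at h01
  have hxy : x + v = y := by rw [hv]; exact add_sub_cancel x y
  rw [hxy] at h01
  have hψ0 : ψ 0 = ⟪gradf x, v⟫ := by simp [hψdef]
  rw [hψ0] at h01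
  linarith


lemma measurable_matrix_det {Ω : Type*} [MeasurableSpace Ω] {d : ℕ}
    {A : Ω → Matrix (Fin d) (Fin d) ℝ}
    (h : ∀ i j, Measurable fun ω => A ω i j) : Measurable fun ω => (A ω).det := by
  simp_rw [Matrix.det_apply']
  exact Finset.measurable_sum _ fun σ _ =>
    (Finset.measurable_prod _ fun i _ => h _ _).const_mul _

lemma measurable_inv_entry {Ω : Type*} [MeasurableSpace Ω] {d : ℕ}
    {A : Ω → Matrix (Fin d) (Fin d) ℝ}
    (h : ∀ i j, Measurable fun ω => A ω i j) (i j : Fin d) :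
    Measurable fun ω => (A ω)⁻¹ i j := by
  simp_rw [Matrix.inv_def, Matrix.smul_apply, Ring.inverse_eq_inv', smul_eq_mul]
  apply Measurable.mul
  · exact (measurable_matrix_det h).inv
  · simp_rw [Matrix.adjugate_apply]
    apply measurable_matrix_det
    intro i' j'
    rcases eq_or_ne i' j with rfl | hne
    · simp only [Matrix.updateRow_apply, if_pos rfl]
      exact measurable_const
    · simp only [Matrix.updateRow_apply, if_neg hne]
      exact h _ _

set_option maxHeartbeats 2000000 in
/-- Global sublinear convergence in expectation and almost-sure
convergence of the gradients under the stochastic norm condition. -/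
theorem global_sublinear_convergence_in_expectation {d : ℕ}
    {Ω : Type*} [m0 : MeasurableSpace Ω] (μP : Measure Ω) [IsProbabilityMeasure μP]
    (L μt Lt α θg fmin ιt : ℝ)
    (hL : 0 < L) (hμt : 0 < μt) (hLt : L ≤ Lt)
    (f : Vec d → ℝ) (gradf : Vec d → Vec d) (Hf : Vec d → (Vec d →L[ℝ] Vec d))
    (hsmooth : ContDiff ℝ 2 f)
    (hgrad : ∀ x, HasGradientAt f (gradf x) x)
    (hHf : ∀ x, HasFDerivAt gradf (Hf x) x)
    (hHub : ∀ x (v : Vec d), ⟪Hf x v, v⟫ ≤ L * ‖v‖ ^ 2)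
    (hbdd : ∀ x, fmin ≤ f x)
    (w g : ℕ → Ω → Vec d) (Ht : ℕ → Ω → Matrix (Fin d) (Fin d) ℝ)
    (hwmeas : ∀ k, Measurable (w k)) (hgmeas : ∀ k, Measurable (g k))
    (hHtmeas : ∀ k, Measurable fun ω => Matrix.of.symm (Ht k ω))
    (hHtspec : ∀ k, ∀ᵐ ω ∂μP, (Ht k ω).IsSymm ∧
      (∀ v : Vec d, μt * ‖v‖ ^ 2 ≤ ⟪toOp (Ht k ω) v, v⟫) ∧
      (∀ v : Vec d, ⟪toOp (Ht k ω) v, v⟫ ≤ Lt * ‖v‖ ^ 2))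
    (w0 : Vec d) (hw0 : ∀ ω, w 0 ω = w0)
    (hα0 : 0 < α) (hα : α ≤ μt / L)
    (hiter : ∀ k ω, w (k + 1) ω = w k ω - α • toOp (Ht k ω)⁻¹ (g k ω))
    (hθg : θg ∈ Set.Ico (0 : ℝ) 1)
    (ι : ℕ → ℝ) (hι_pos : ∀ k, 0 < ι k) (hι_sum : HasSum ι ιt)
    (hfint : ∀ k, Integrable (fun ω => f (w k ω)) μP)
    (hgradint : ∀ k, Integrable (fun ω => ‖gradf (w k ω)‖ ^ 2) μP)
    (hqint : ∀ k, Integrable (fun ω =>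
      ⟪toOp (Ht k ω)⁻¹ (g k ω - gradf (w k ω)), g k ω - gradf (w k ω)⟫) μP)
    (hnorm : ∀ k,
      μP[(fun ω => ⟪toOp (Ht k ω)⁻¹ (g k ω - gradf (w k ω)),
            g k ω - gradf (w k ω)⟫) |
          MeasurableSpace.comap (fun ω => (w k ω, Matrix.of.symm (Ht k ω)))
            inferInstance]
        ≤ᵐ[μP] fun ω =>
          θg ^ 2 * ⟪toOp (Ht k ω)⁻¹ (gradf (w k ω)), gradf (w k ω)⟫ + ι k) :
    (∀ T : ℕ, ∀ hT : 0 < T,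
      (Finset.range T).inf' (Finset.nonempty_range_iff.mpr hT.ne')
          (fun k => ∫ ω, ‖gradf (w k ω)‖ ^ 2 ∂μP) ≤
        Lt / ((1 - θg ^ 2) * T) * (2 * (f w0 - fmin) / α + ιt)) ∧
    (∀ᵐ ω ∂μP, Summable fun k => ‖gradf (w k ω)‖ ^ 2) ∧
    (∀ᵐ ω ∂μP, Tendsto (fun k => ‖gradf (w k ω)‖ ^ 2) atTop (nhds 0)) := by

  have hLt0 : 0 < Lt := hL.trans_le hLt
  have hθ1 : θg ^ 2 < 1 := by nlinarith [hθg.1, hθg.2]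
  have h1θ : 0 < 1 - θg ^ 2 := by linarith
  -- abbreviations
  set Q : ℕ → Ω → ℝ := fun k ω =>
    ⟪toOp (Ht k ω)⁻¹ (gradf (w k ω)), gradf (w k ω)⟫ with hQdef
  set X : ℕ → Ω → ℝ := fun k ω =>
    ⟪toOp (Ht k ω)⁻¹ (g k ω - gradf (w k ω)), g k ω - gradf (w k ω)⟫ with hXdef
  have hXint : ∀ k, Integrable (X k) μP := fun k => hqint k
  -- inner product formula
  have hQformula : ∀ (B : Matrix (Fin d) (Fin d) ℝ) (u v : Vec d),
      ⟪toOp B u, v⟫ = ∑ i, (∑ j, B i j * u j) * v i := by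
    intro B u v
    rw [toOp_apply, Matrix.toEuclideanLin_apply, PiLp.inner_apply]
    simp [RCLike.inner_apply, Matrix.mulVec, dotProduct, mul_comm]
  -- measurability of Q
  have hentry : ∀ k (i j : Fin d), Measurable fun ω => Ht k ω i j := by
    intro k i j
    exact (measurable_pi_apply j).comp ((measurable_pi_apply i).comp (hHtmeas k))
  have hdiff : Differentiable ℝ gradf := fun x => (hHf x).differentiableAt
  have hgradc : Continuous gradf := hdiff.continuous
  have hcoord : ∀ k (i : Fin d), Measurable fun ω => gradf (w k ω) i := fun k i =>
    ((EuclideanSpace.proj (𝕜 := ℝ) i).continuous.measurable).comp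
      (hgradc.measurable.comp (hwmeas k))
  have hQmeas : ∀ k, Measurable (Q k) := by
    intro k
    have : Q k = fun ω => ∑ i, (∑ j, (Ht k ω)⁻¹ i j * gradf (w k ω) j) * gradf (w k ω) i := by
      funext ω; exact hQformula _ _ _
    rw [this]
    exact Finset.measurable_sum _ fun i _ =>
      (Finset.measurable_sum _ fun j _ =>
        (measurable_inv_entry (hentry k) i j).mul (hcoord k j)).mul (hcoord k i)
  -- a.s. facts about the inverse operator
  have hfacts : ∀ k, ∀ᵐ ω ∂μP,
      (∀ u v : Vec d, ⟪toOp (Ht k ω)⁻¹ u, v⟫ = ⟪u, toOp (Ht k ω)⁻¹ v⟫) ∧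
      (∀ v : Vec d, ‖toOp (Ht k ω)⁻¹ v‖ ^ 2 ≤ (1 / μt) * ⟪toOp (Ht k ω)⁻¹ v, v⟫) ∧
      (∀ v : Vec d, (1 / Lt) * ‖v‖ ^ 2 ≤ ⟪toOp (Ht k ω)⁻¹ v, v⟫) ∧
      (∀ v : Vec d, ⟪toOp (Ht k ω)⁻¹ v, v⟫ ≤ (1 / μt) * ‖v‖ ^ 2) := by
    intro k
    filter_upwards [hHtspec k] with ω h
    exact opFacts hμt hLt0 h.1 h.2.1 h.2.2
  -- a.s. one-step descent
  have hstep : ∀ k, ∀ᵐ ω ∂μP,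
      f (w (k + 1) ω) ≤ f (w k ω) - α / 2 * Q k ω + α / 2 * X k ω := by
    intro k
    filter_upwards [hfacts k] with ω hf
    obtain ⟨hS, hSn, hSlb, _⟩ := hf
    set S := toOp (Ht k ω)⁻¹ with hSdef
    set gk := g k ω with hgk
    set G := gradf (w k ω) with hG
    set ek := gk - G with hek
    have hy : w (k + 1) ω - w k ω = -(α • S gk) := by rw [hiter k ω]; abel
    have hd := descent f gradf Hf hgrad hHf hHub (w k ω) (w (k + 1) ω)
    rw [hy] at hd
    have h1 : ⟪G, -(α • S gk)⟫ = -(α * ⟪G, S gk⟫) := by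
      rw [inner_neg_right, real_inner_smul_right]
    have h2 : ‖-(α • S gk)‖ ^ 2 = α ^ 2 * ‖S gk‖ ^ 2 := by
      rw [norm_neg, norm_smul, mul_pow, Real.norm_eq_abs, sq_abs]
    have h3 : ‖S gk‖ ^ 2 ≤ (1 / μt) * ⟪S gk, gk⟫ := hSn gk
    have h4 : (0 : ℝ) ≤ ⟪S gk, gk⟫ := le_trans (by positivity) (hSlb gk)
    have hαμ : α * L ≤ μt := (le_div_iff₀ hL).mp hα
    have h3' : μt * ‖S gk‖ ^ 2 ≤ ⟪S gk, gk⟫ := by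
      have hmul := mul_le_mul_of_nonneg_left h3 hμt.le
      have heq : μt * ((1 / μt) * ⟪S gk, gk⟫) = ⟪S gk, gk⟫ := by field_simp
      linarith [hmul.trans_eq heq]
    have h5 : L / 2 * ‖-(α • S gk)‖ ^ 2 ≤ α / 2 * ⟪S gk, gk⟫ := by
      rw [h2]
      have c1 : α * L * ‖S gk‖ ^ 2 ≤ ⟪S gk, gk⟫ :=
        le_trans (mul_le_mul_of_nonneg_right hαμ (sq_nonneg _)) h3'
      have c2 : α * (α * L * ‖S gk‖ ^ 2) ≤ α * ⟪S gk, gk⟫ :=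
        mul_le_mul_of_nonneg_left c1 hα0.le
      nlinarith [c2]
    -- expansion identity
    have hsym2 : ⟪S ek, G⟫ = ⟪S G, ek⟫ := by rw [hS ek G, real_inner_comm]
    have eA : ⟪G, S gk⟫ = ⟪S G, G⟫ + ⟪S G, ek⟫ := by
      have : gk = G + ek := by rw [hek]; abel
      rw [this]
      simp only [map_add, inner_add_right]
      rw [← hS G G, ← hS G ek]
    have eB : ⟪S gk, gk⟫ = ⟪S G, G⟫ + 2 * ⟪S G, ek⟫ + ⟪S ek, ek⟫ := by
      have hgkeq : gk = G + ek := by rw [hek]; abel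
      rw [hgkeq]
      simp only [map_add, inner_add_left, inner_add_right]
      rw [hsym2]; ring
    have hQω : Q k ω = ⟪S G, G⟫ := rfl
    have hXω : X k ω = ⟪S ek, ek⟫ := rfl
    rw [hQω, hXω]
    rw [h1] at hd
    have h6 : f (w (k + 1) ω) ≤ f (w k ω) - α * ⟪G, S gk⟫ + α / 2 * ⟪S gk, gk⟫ := by
      linarith [hd, h5]
    rw [eA, eB] at h6
    linarith [h6]
  -- a.s. bounds on Q
  have hQlb : ∀ k, ∀ᵐ ω ∂μP, (1 / Lt) * ‖gradf (w k ω)‖ ^ 2 ≤ Q k ω := by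
    intro k; filter_upwards [hfacts k] with ω hf; exact hf.2.2.1 _
  have hQub : ∀ k, ∀ᵐ ω ∂μP, Q k ω ≤ (1 / μt) * ‖gradf (w k ω)‖ ^ 2 := by
    intro k; filter_upwards [hfacts k] with ω hf; exact hf.2.2.2 _
  have hQ0 : ∀ k, ∀ᵐ ω ∂μP, 0 ≤ Q k ω := by
    intro k; filter_upwards [hQlb k] with ω h; exact le_trans (by positivity) h
  have hQint : ∀ k, Integrable (Q k) μP := by
    intro k
    refine Integrable.mono' ((hgradint k).const_mul (1 / μt))
      (hQmeas k).aestronglyMeasurable ?_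
    filter_upwards [hQub k, hQ0 k] with ω h1 h2
    rw [Real.norm_eq_abs, abs_of_nonneg h2]; exact h1
  set q : ℕ → ℝ := fun k => ∫ ω, Q k ω ∂μP with hqdef
  set G : ℕ → ℝ := fun k => ∫ ω, ‖gradf (w k ω)‖ ^ 2 ∂μP with hGdef
  set F : ℕ → ℝ := fun k => ∫ ω, f (w k ω) ∂μP with hFdef
  have hq0 : ∀ k, 0 ≤ q k := fun k => integral_nonneg_of_ae (hQ0 k)
  have hG0 : ∀ k, 0 ≤ G k := fun k => integral_nonneg (fun ω => by positivity)
  have hGq : ∀ k, G k ≤ Lt * q k := by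
    intro k
    have h := integral_mono_ae ((hgradint k).const_mul (1 / Lt)) (hQint k) (hQlb k)
    rw [integral_const_mul] at h
    have heq : Lt * ((1 / Lt) * G k) = G k := by field_simp
    have := mul_le_mul_of_nonneg_left h hLt0.le
    linarith [heq ▸ this]
  have hEX : ∀ k, ∫ ω, X k ω ∂μP ≤ θg ^ 2 * q k + ι k := by
    intro k
    have hmle : MeasurableSpace.comap
        (fun ω => (w k ω, Matrix.of.symm (Ht k ω))) inferInstance ≤ m0 :=
      Measurable.comap_le ((hwmeas k).prodMk (hHtmeas k))
    have h1 : ∫ ω, (μP[(fun ω => ⟪toOp (Ht k ω)⁻¹ (g k ω - gradf (w k ω)),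
            g k ω - gradf (w k ω)⟫) |
          MeasurableSpace.comap (fun ω => (w k ω, Matrix.of.symm (Ht k ω)))
            inferInstance]) ω ∂μP = ∫ ω, X k ω ∂μP :=
      integral_condExp hmle
    have h2 := integral_mono_ae (μ := μP) integrable_condExp
      (((hQint k).const_mul (θg ^ 2)).add (integrable_const (ι k))) (hnorm k)
    rw [h1] at h2
    calc ∫ ω, X k ω ∂μP
        ≤ ∫ ω, (θg ^ 2 * Q k ω + ι k) ∂μP := h2
      _ = θg ^ 2 * q k + ι k := by
          rw [integral_add ((hQint k).const_mul _) (integrable_const _),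
            integral_const_mul, integral_const, probReal_univ,
            smul_eq_mul, one_mul]
  have hFstep : ∀ k, F (k + 1) ≤ F k - α / 2 * q k + α / 2 * (θg ^ 2 * q k + ι k) := by
    intro k
    have hint2 : Integrable (fun ω => f (w k ω) - α / 2 * Q k ω + α / 2 * X k ω) μP :=
      ((hfint k).sub ((hQint k).const_mul _)).add ((hXint k).const_mul _)
    have hi1 : Integrable (fun ω => f (w k ω) - α / 2 * Q k ω) μP :=
      (hfint k).sub ((hQint k).const_mul _)
    have hi2 : Integrable (fun ω => α / 2 * X k ω) μP := (hXint k).const_mul _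
    have hi3 : Integrable (fun ω => α / 2 * Q k ω) μP := (hQint k).const_mul _
    have h := integral_mono_ae (hfint (k + 1)) hint2 (hstep k)
    rw [integral_add hi1 hi2, integral_sub (hfint k) hi3,
      integral_const_mul, integral_const_mul] at h
    have hmul : α / 2 * ∫ ω, X k ω ∂μP ≤ α / 2 * (θg ^ 2 * q k + ι k) :=
      mul_le_mul_of_nonneg_left (hEX k) (by positivity)
    exact h.trans (by linarith)
  have hFsum : ∀ T : ℕ, F T + (α / 2 * (1 - θg ^ 2)) * ∑ k ∈ Finset.range T, q k
      ≤ F 0 + α / 2 * ∑ k ∈ Finset.range T, ι k := by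
    intro T
    induction T with
    | zero => simp
    | succ n ih =>
      rw [Finset.sum_range_succ, Finset.sum_range_succ]
      have h := hFstep n
      ring_nf at h ih ⊢
      nlinarith [h, ih]
  have hF0 : F 0 = f w0 := by
    rw [hFdef]
    simp only [hw0]
    simp
  have hFmin : ∀ T, fmin ≤ F T := by
    intro T
    calc fmin = ∫ _, fmin ∂μP := by simp
      _ ≤ F T := integral_mono (integrable_const _) (hfint T) (fun ω => hbdd _)
  have hιsum : ∀ T, ∑ k ∈ Finset.range T, ι k ≤ ιt := fun T =>
    sum_le_hasSum (Finset.range T) (fun k _ => (hι_pos k).le) hι_sum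
  have hqsum : ∀ T, (α / 2 * (1 - θg ^ 2)) * ∑ k ∈ Finset.range T, q k
      ≤ (f w0 - fmin) + α / 2 * ιt := by
    intro T
    have h1 := hFsum T
    have h2 := hFmin T
    have h4 : α / 2 * ∑ k ∈ Finset.range T, ι k ≤ α / 2 * ιt :=
      mul_le_mul_of_nonneg_left (hιsum T) (by positivity)
    rw [hF0] at h1
    linarith
  set C := Lt / (1 - θg ^ 2) * (2 * (f w0 - fmin) / α + ιt) with hCdef
  have hGsum : ∀ T, ∑ k ∈ Finset.range T, G k ≤ C := by
    intro T
    have h1 : ∑ k ∈ Finset.range T, G k ≤ Lt * ∑ k ∈ Finset.range T, q k := by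
      rw [Finset.mul_sum]; exact Finset.sum_le_sum (fun k _ => hGq k)
    have hc : 0 < α / 2 * (1 - θg ^ 2) := by positivity
    have h3 : ∑ k ∈ Finset.range T, q k
        ≤ ((f w0 - fmin) + α / 2 * ιt) / (α / 2 * (1 - θg ^ 2)) :=
      (le_div_iff₀ hc).mpr (by linarith [hqsum T])
    have h4 := mul_le_mul_of_nonneg_left h3 hLt0.le
    have hαne : α ≠ 0 := ne_of_gt hα0
    have hθne : (1 - θg ^ 2) ≠ 0 := ne_of_gt h1θ
    have hCeq : C = Lt * (((f w0 - fmin) + α / 2 * ιt) / (α / 2 * (1 - θg ^ 2))) := by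
      rw [hCdef]; field_simp
    rw [hCeq]
    linarith
  have hsum_ae : ∀ᵐ ω ∂μP, Summable fun k => ‖gradf (w k ω)‖ ^ 2 := by
    have hmeas2 : ∀ k : ℕ, AEMeasurable (fun ω => ENNReal.ofReal (‖gradf (w k ω)‖ ^ 2)) μP :=
      fun k => ENNReal.measurable_ofReal.comp_aemeasurable (hgradint k).aemeasurable
    have hlin : ∀ k, ∫⁻ ω, ENNReal.ofReal (‖gradf (w k ω)‖ ^ 2) ∂μP = ENNReal.ofReal (G k) :=
      fun k => (ofReal_integral_eq_lintegral_ofReal (hgradint k)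
        (Eventually.of_forall fun ω => by positivity)).symm
    have htsum : ∑' k, ENNReal.ofReal (G k) ≤ ENNReal.ofReal C := by
      rw [ENNReal.tsum_eq_iSup_sum]
      refine iSup_le fun s => ?_
      obtain ⟨n, hn⟩ := Finset.exists_nat_subset_range s
      calc ∑ k ∈ s, ENNReal.ofReal (G k)
          ≤ ∑ k ∈ Finset.range n, ENNReal.ofReal (G k) :=
            Finset.sum_le_sum_of_subset hn
        _ = ENNReal.ofReal (∑ k ∈ Finset.range n, G k) := by
            rw [ENNReal.ofReal_sum_of_nonneg (fun k _ => hG0 k)]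
        _ ≤ ENNReal.ofReal C := ENNReal.ofReal_le_ofReal (hGsum n)
    have hfin : ∫⁻ ω, ∑' k, ENNReal.ofReal (‖gradf (w k ω)‖ ^ 2) ∂μP < ⊤ := by
      rw [lintegral_tsum hmeas2]
      simp_rw [hlin]
      exact lt_of_le_of_lt htsum ENNReal.ofReal_lt_top
    have hae := ae_lt_top' (AEMeasurable.ennreal_tsum hmeas2) hfin.ne
    filter_upwards [hae] with ω hω
    have hsummable := ENNReal.summable_toReal hω.ne
    refine hsummable.congr fun k => ?_
    exact ENNReal.toReal_ofReal (by positivity)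
  refine ⟨?_, hsum_ae, ?_⟩
  · intro T hT
    have hne := Finset.nonempty_range_iff.mpr hT.ne'
    have hmle : ∀ k ∈ Finset.range T,
        (Finset.range T).inf' hne G ≤ G k := fun k hk => Finset.inf'_le _ hk
    have h1 : (T : ℝ) * (Finset.range T).inf' hne G ≤ ∑ k ∈ Finset.range T, G k := by
      have := Finset.card_nsmul_le_sum (Finset.range T) G _ hmle
      simpa [Finset.card_range, nsmul_eq_mul] using this
    have h2 : (T : ℝ) * (Finset.range T).inf' hne G ≤ C := h1.trans (hGsum T)
    have hTpos : (0 : ℝ) < T := by exact_mod_cast hT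
    have hTne : (T : ℝ) ≠ 0 := ne_of_gt hTpos
    have hαne : α ≠ 0 := ne_of_gt hα0
    have hθne : (1 - θg ^ 2) ≠ 0 := ne_of_gt h1θ
    have hgoal : Lt / ((1 - θg ^ 2) * T) * (2 * (f w0 - fmin) / α + ιt) = C / T := by
      rw [hCdef]; field_simp
    rw [hgoal, le_div_iff₀ hTpos]
    linarith
  · filter_upwards [hsum_ae] with ω h
    exact h.tendsto_atTop_zero
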